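/- Let n ≥ 1, let F = 𝔽_{2^n}, and let x, y ∈ F with y ≠ x³. Then the number of ordered pairs (a, b) ∈ F × F satisfying a³ + b³ + (x + a + b)³ = y is at least 2^n − 2·√(2^n) − 2. -/

import Mathlib

open Finset
set_option linter.unusedSectionVars false
set_option linter.unnecessarySimpa false

namespace CountAffineAux

variable (F : Type*) [Field F] [Fintype F] [DecidableEq F] [CharP F 2]

/-- The image of the Artin–Schreier map `z ↦ z² + z`. -/
def HS : Finset F := univ.image (fun z => z ^ 2 + z)

variable {F}

lemma mem_HS {u : F} : u ∈ HS F ↔ ∃ z : F, z ^ 2 + z = u := by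
  simp [HS]

lemma fiber_card (z0 : F) :
    (univ.filter fun z : F => z ^ 2 + z = z0 ^ 2 + z0).card = 2 := by
  have h2 : (2 : F) = 0 := CharTwo.two_eq_zero
  have hne : z0 ≠ z0 + 1 := by
    intro h
    have : (1 : F) = 0 := by linear_combination -h
    exact one_ne_zero this
  have hset : (univ.filter fun z : F => z ^ 2 + z = z0 ^ 2 + z0) = {z0, z0 + 1} := by
    ext z
    simp only [mem_filter, mem_univ, true_and, mem_insert, mem_singleton]
    constructor
    · intro h
      have hz : (z + z0) * (z + z0 + 1) = 0 := by
        linear_combination h + (z * z0 + z0 ^ 2 + z0) * h2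
      rcases mul_eq_zero.mp hz with h' | h'
      · left; linear_combination h' - z0 * h2
      · right; linear_combination h' - (z0 + 1) * h2
    · rintro (rfl | rfl)
      · rfl
      · linear_combination (z0 + 1) * h2
  rw [hset]
  rw [card_insert_of_notMem (by simpa using hne), card_singleton]

lemma two_mul_card_HS : 2 * (HS F).card = Fintype.card F := by
  have h := Finset.card_eq_sum_card_image (fun z : F => z ^ 2 + z) univ
  rw [card_univ] at h
  rw [h]
  rw [Finset.sum_congr rfl (fun b hb => ?_), Finset.sum_const, smul_eq_mul, mul_comm]
  · rfl
  · rw [mem_image] at hb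
    obtain ⟨z0, _, rfl⟩ := hb
    exact fiber_card z0


lemma HS_card_lt : (HS F).card < Fintype.card F := by
  have h := two_mul_card_HS (F := F)
  have hq : 0 < Fintype.card F := Fintype.card_pos
  omega

lemma zero_mem_HS : (0 : F) ∈ HS F := mem_HS.mpr ⟨0, by ring⟩

lemma HS_add {u v : F} (hu : u ∈ HS F) (hv : v ∈ HS F) : u + v ∈ HS F := by
  obtain ⟨z, rfl⟩ := mem_HS.mp hu
  obtain ⟨w, rfl⟩ := mem_HS.mp hv
  have h2 : (2 : F) = 0 := CharTwo.two_eq_zero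
  exact mem_HS.mpr ⟨z + w, by linear_combination (z * w) * h2⟩

lemma HS_add_of_not_mem {u v : F} (hu : u ∉ HS F) (hv : v ∉ HS F) :
    u + v ∈ HS F := by
  classical
  set B : Finset F := (HS F).image (u + ·) with hB
  have hinj : Function.Injective (u + ·) := add_right_injective u
  have hcardB : B.card = (HS F).card := Finset.card_image_of_injective _ hinj
  have hdisj : Disjoint (HS F) B := by
    rw [Finset.disjoint_left]
    rintro a ha haB
    rw [hB, mem_image] at haB
    obtain ⟨h, hh, rfl⟩ := haB
    exact hu (by simpa [add_assoc, CharTwo.add_self_eq_zero] using HS_add ha hh)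
  have hcardU : ((HS F) ∪ B).card = Fintype.card F := by
    rw [Finset.card_union_of_disjoint hdisj, hcardB]
    have := two_mul_card_HS (F := F)
    omega
  have huniv : (HS F) ∪ B = univ := Finset.eq_univ_of_card _ hcardU
  have hvB : v ∈ B := by
    have : v ∈ (HS F) ∪ B := huniv ▸ mem_univ v
    rcases Finset.mem_union.mp this with h | h
    · exact absurd h hv
    · exact h
  rw [hB, mem_image] at hvB
  obtain ⟨h, hh, rfl⟩ := hvB
  have : u + (u + h) = h := by
    rw [← add_assoc, CharTwo.add_self_eq_zero, zero_add]
  rw [this]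
  exact hh

lemma HS_add_iff {u h : F} (hh : h ∈ HS F) : u + h ∈ HS F ↔ u ∈ HS F := by
  constructor
  · intro huh
    have := HS_add huh hh
    simpa [add_assoc, CharTwo.add_self_eq_zero] using this
  · intro hu; exact HS_add hu hh

variable (F) in
/-- The quadratic additive character determined by `HS`. -/
noncomputable def psi (u : F) : ℝ := if u ∈ HS F then 1 else -1

lemma psi_zero : psi F (0 : F) = 1 := if_pos zero_mem_HS

lemma psi_add (u v : F) : psi F (u + v) = psi F u * psi F v := by
  unfold psi
  by_cases hu : u ∈ HS F <;> by_cases hv : v ∈ HS F <;>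
    simp only [hu, hv, if_pos, if_neg, if_true, if_false]
  · rw [if_pos (HS_add hu hv)]; norm_num
  · rw [if_neg (fun h => hv ((HS_add_iff hu).mp (by rwa [add_comm] at h)))]; norm_num
  · rw [if_neg (fun h => hu ((HS_add_iff hv).mp h))]; norm_num
  · rw [if_pos (HS_add_of_not_mem hu hv)]; norm_num

lemma psi_sq (u : F) : psi F u * psi F u = 1 := by
  unfold psi; split <;> norm_num

lemma psi_eq_one_iff (u : F) : psi F u = 1 ↔ u ∈ HS F := by
  unfold psi; split <;> simp_all <;> norm_num

lemma sum_psi_mul {w : F} (hw : w ≠ 0) : ∑ d : F, psi F (d * w) = 0 := by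
  obtain ⟨u, hu⟩ : ∃ u : F, u ∉ HS F := by
    by_contra h
    push_neg at h
    have heq : (HS F) = univ := Finset.eq_univ_iff_forall.mpr h
    have h2 := HS_card_lt (F := F)
    rw [heq, card_univ] at h2
    exact lt_irrefl _ h2
  set b := u * w⁻¹ with hb
  have hbw : b * w = u := by
    rw [hb, mul_assoc, inv_mul_cancel₀ hw, mul_one]
  have key : ∑ d : F, psi F (d * w) = ∑ d : F, psi F ((b + d) * w) := by
    exact (Fintype.sum_bijective (fun d => b + d) (Equiv.addLeft b).bijective _ _
      (fun d => rfl)).symm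
  have key2 : ∀ d : F, psi F ((b + d) * w) = psi F (b * w) * psi F (d * w) := by
    intro d
    rw [add_mul, psi_add]
  have hpsib : psi F (b * w) = -1 := by
    rw [hbw]; exact if_neg hu
  have := key
  rw [Finset.sum_congr rfl (fun d _ => key2 d), ← Finset.mul_sum, hpsib] at this
  linarith


variable (F) in
/-- The cubic exponential sum. -/
noncomputable def Ssum (d : F) : ℝ := ∑ t : F, psi F (d * t ^ 3)

lemma Ssum_zero : Ssum F (0 : F) = Fintype.card F := by
  simp [Ssum, psi_zero]

lemma sum_psi_cube (t : F) :
    ∑ d : F, psi F (d * t ^ 3) = if t = 0 then (Fintype.card F : ℝ) else 0 := by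
  by_cases ht : t = 0
  · simp [ht, psi_zero]
  · rw [if_neg ht]; exact sum_psi_mul (pow_ne_zero 3 ht)

lemma sum_Ssum : ∑ d : F, Ssum F d = Fintype.card F := by
  unfold Ssum
  rw [Finset.sum_comm]
  rw [Finset.sum_congr rfl fun t _ => sum_psi_cube t]
  simp

lemma sum_Ssum_sq : ∑ d : F, (Ssum F d) ^ 2 =
    (Fintype.card F : ℝ) * ((univ.filter fun p : F × F => p.1 ^ 3 = p.2 ^ 3).card) := by
  unfold Ssum
  have expand : ∀ d : F, (∑ t : F, psi F (d * t ^ 3)) ^ 2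
      = ∑ p : F × F, psi F (d * (p.1 ^ 3 + p.2 ^ 3)) := by
    intro d
    rw [sq, Finset.sum_mul_sum, Fintype.sum_prod_type]
    apply Finset.sum_congr rfl; intro t _
    apply Finset.sum_congr rfl; intro t' _
    rw [← psi_add, mul_add]
  rw [Finset.sum_congr rfl fun d _ => expand d, Finset.sum_comm]
  have inner : ∀ p : F × F, ∑ d : F, psi F (d * (p.1 ^ 3 + p.2 ^ 3))
      = if p.1 ^ 3 = p.2 ^ 3 then (Fintype.card F : ℝ) else 0 := by
    intro p
    by_cases hp : p.1 ^ 3 = p.2 ^ 3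
    · rw [if_pos hp]
      have : p.1 ^ 3 + p.2 ^ 3 = 0 := by rw [hp, CharTwo.add_self_eq_zero]
      simp [this, psi_zero]
    · rw [if_neg hp]
      apply sum_psi_mul
      intro h
      have h2 : (2 : F) = 0 := CharTwo.two_eq_zero
      exact hp (by linear_combination h - p.2 ^ 3 * h2)
  rw [Finset.sum_congr rfl fun p _ => inner p, ← Finset.sum_filter, Finset.sum_const,
    nsmul_eq_mul, mul_comm]


lemma cube_fiber_card (t : F) (ht : t ≠ 0) :
    (univ.filter fun t' : F => t' ^ 3 = t ^ 3).card
      = (univ.filter fun z : F => z ^ 3 = 1).card := by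
  apply Finset.card_bij' (fun t' _ => t' * t⁻¹) (fun z _ => z * t)
  · intro t' ht'
    rw [mem_filter] at ht' ⊢
    refine ⟨mem_univ _, ?_⟩
    rw [mul_pow, ht'.2, inv_pow, mul_inv_cancel₀ (pow_ne_zero 3 ht)]
  · intro z hz
    rw [mem_filter] at hz ⊢
    refine ⟨mem_univ _, ?_⟩
    rw [mul_pow, hz.2, one_mul]
  · intro t' _
    field_simp
  · intro z _
    field_simp

lemma unity_count_odd (hco : Nat.Coprime 3 (Fintype.card Fˣ)) :
    (univ.filter fun z : F => z ^ 3 = 1).card = 1 := by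
  have : (univ.filter fun z : F => z ^ 3 = 1) = {1} := by
    ext z
    simp only [mem_filter, mem_univ, true_and, mem_singleton]
    constructor
    · intro hz
      have hz0 : z ≠ 0 := by
        intro h; rw [h] at hz; simp at hz
      set u : Fˣ := Units.mk0 z hz0 with hu
      have hu3 : u ^ 3 = 1 := by
        ext; push_cast [hu]; exact hz
      have h1 : orderOf u ∣ 3 := orderOf_dvd_of_pow_eq_one hu3
      have h2 : orderOf u ∣ Fintype.card Fˣ := orderOf_dvd_card
      have h3 : orderOf u ∣ Nat.gcd 3 (Fintype.card Fˣ) := Nat.dvd_gcd h1 h2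
      rw [Nat.Coprime] at hco
      rw [hco, Nat.dvd_one, orderOf_eq_one_iff] at h3
      have : z = ((u : Fˣ) : F) := rfl
      rw [this, h3, Units.val_one]
    · rintro rfl; exact one_pow 3
  rw [this, card_singleton]

lemma unity_count_even (h3 : 3 ∣ Fintype.card Fˣ) :
    (univ.filter fun z : F => z ^ 3 = 1).card = 3 := by
  haveI : Fact (Nat.Prime 3) := ⟨by norm_num⟩
  obtain ⟨ζ, hζ⟩ := exists_prime_orderOf_dvd_card (G := Fˣ) 3 h3
  have hζ3 : (ζ : F) ^ 3 = 1 := by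
    have h := pow_orderOf_eq_one ζ
    rw [hζ] at h
    have h2 := congrArg (Units.val) h
    push_cast at h2
    exact h2
  have hζ1 : (ζ : F) ≠ 1 := by
    intro h
    have : ζ = 1 := Units.ext (by simpa using h)
    rw [this, orderOf_one] at hζ; norm_num at hζ
  have hζ2 : (ζ : F) ^ 2 ≠ 1 := by
    intro h
    have : ζ ^ 2 = 1 := Units.ext (by push_cast; simpa using h)
    have := orderOf_dvd_of_pow_eq_one this
    rw [hζ] at this; norm_num at this
  have hζ21 : (ζ : F) ^ 2 ≠ (ζ : F) := by
    intro h
    have hz0 : (ζ : F) ≠ 0 := Units.ne_zero ζ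
    have h' : (ζ : F) * (ζ : F) = (ζ : F) * 1 := by
      rw [mul_one]; linear_combination h
    exact hζ1 (mul_left_cancel₀ hz0 h')
  have hsub : ({1, (ζ : F), (ζ : F) ^ 2} : Finset F) ⊆
      univ.filter fun z : F => z ^ 3 = 1 := by
    intro z hz
    simp only [mem_insert, mem_singleton] at hz
    rw [mem_filter]
    refine ⟨mem_univ _, ?_⟩
    rcases hz with rfl | rfl | rfl
    · exact one_pow 3
    · exact hζ3
    · rw [← pow_mul]
      rw [show 2 * 3 = 3 * 2 by ring, pow_mul, hζ3, one_pow]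
  have hm1 : (1 : F) ∉ ({(ζ : F), (ζ : F) ^ 2} : Finset F) := by
    simp only [mem_insert, mem_singleton]
    push_neg
    exact ⟨Ne.symm hζ1, fun h => hζ2 h.symm⟩
  have hm2 : (ζ : F) ∉ ({(ζ : F) ^ 2} : Finset F) := by
    simp only [mem_singleton]
    exact fun h => hζ21 h.symm
  have hcard3 : ({1, (ζ : F), (ζ : F) ^ 2} : Finset F).card = 3 := by
    rw [card_insert_of_notMem hm1, card_insert_of_notMem hm2, card_singleton]
  have hle : (univ.filter fun z : F => z ^ 3 = 1).card ≤ 3 := by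
    set p : Polynomial F := Polynomial.X ^ 3 - Polynomial.C 1 with hp
    have hp0 : p ≠ 0 := by
      intro h
      have := Polynomial.natDegree_X_pow_sub_C (n := 3) (r := (1 : F))
      rw [← hp, h] at this
      simp at this
    have hsub2 : (univ.filter fun z : F => z ^ 3 = 1) ⊆ p.roots.toFinset := by
      intro z hz
      rw [mem_filter] at hz
      rw [Multiset.mem_toFinset, Polynomial.mem_roots hp0]
      simp [Polynomial.IsRoot, hp, hz.2]
    calc (univ.filter fun z : F => z ^ 3 = 1).card ≤ p.roots.toFinset.card :=
          Finset.card_le_card hsub2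
      _ ≤ Multiset.card p.roots := Multiset.toFinset_card_le _
      _ ≤ p.natDegree := Polynomial.card_roots' p
      _ = 3 := Polynomial.natDegree_X_pow_sub_C
  have hge : 3 ≤ (univ.filter fun z : F => z ^ 3 = 1).card := by
    calc (3:ℕ) = ({1, (ζ : F), (ζ : F) ^ 2} : Finset F).card := hcard3.symm
      _ ≤ _ := Finset.card_le_card hsub
  omega


lemma card_cube_pairs :
    (univ.filter fun p : F × F => p.1 ^ 3 = p.2 ^ 3).card
      = 1 + (Fintype.card F - 1) * (univ.filter fun z : F => z ^ 3 = 1).card := by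
  rw [Finset.card_filter, Fintype.sum_prod_type, Finset.sum_comm]
  have inner : ∀ b : F, (∑ a : F, if a ^ 3 = b ^ 3 then 1 else 0)
      = if b = 0 then 1 else (univ.filter fun z : F => z ^ 3 = 1).card := by
    intro b
    rw [← Finset.card_filter]
    by_cases hb : b = 0
    · subst hb
      rw [if_pos rfl]
      have : (univ.filter fun a : F => a ^ 3 = (0 : F) ^ 3) = {0} := by
        ext a
        simp [pow_eq_zero_iff]
      rw [this, card_singleton]
    · rw [if_neg hb, cube_fiber_card b hb]
  rw [Finset.sum_congr rfl fun b _ => inner b]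
  rw [← Finset.sum_filter_add_sum_filter_not univ (fun b : F => b = 0)]
  have h1 : univ.filter (fun b : F => b = 0) = {0} := by
    ext b; simp
  have h2 : univ.filter (fun b : F => ¬b = 0) = univ.erase 0 := by
    ext b; simp [Finset.mem_erase, and_comm]
  rw [h1, h2]
  rw [Finset.sum_singleton, if_pos rfl, Finset.sum_congr rfl
    (fun b hb => if_neg (Finset.mem_erase.mp hb).1), Finset.sum_const,
    Finset.card_erase_of_mem (mem_univ 0), card_univ, smul_eq_mul]

lemma Ssum_mul_cube (d e : F) (he : e ≠ 0) : Ssum F (d * e ^ 3) = Ssum F d := by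
  unfold Ssum
  exact Fintype.sum_bijective (fun t : F => e * t) (Equiv.mulLeft₀ e he).bijective _ _
    (fun t => congrArg (psi F) (by ring))

lemma card_cubeclass (d : F) (hd : d ≠ 0)
    (h3 : (univ.filter fun z : F => z ^ 3 = 1).card = 3) :
    3 * ((univ.filter fun e : F => e ≠ 0).image (fun e => d * e ^ 3)).card
      = Fintype.card F - 1 := by
  have h := Finset.card_eq_sum_card_image (fun e : F => d * e ^ 3)
      (univ.filter fun e : F => e ≠ 0)
  have hcard : (univ.filter fun e : F => e ≠ 0).card = Fintype.card F - 1 := by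
    have : (univ.filter fun e : F => e ≠ 0) = univ.erase 0 := by
      ext b; simp [Finset.mem_erase, and_comm]
    rw [this, Finset.card_erase_of_mem (mem_univ 0), card_univ]
  have hfib : ∀ u ∈ (univ.filter fun e : F => e ≠ 0).image (fun e => d * e ^ 3),
      ((univ.filter fun e : F => e ≠ 0).filter fun e => d * e ^ 3 = u).card = 3 := by
    intro u hu
    rw [mem_image] at hu
    obtain ⟨e0, he0, rfl⟩ := hu
    rw [mem_filter] at he0
    have he0' : e0 ≠ 0 := he0.2
    have hset : ((univ.filter fun e : F => e ≠ 0).filter fun e => d * e ^ 3 = d * e0 ^ 3)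
        = univ.filter fun e : F => e ^ 3 = e0 ^ 3 := by
      ext e
      simp only [Finset.filter_filter, mem_filter, mem_univ, true_and]
      constructor
      · rintro ⟨-, h⟩
        exact mul_left_cancel₀ hd h
      · intro h
        refine ⟨?_, by rw [h]⟩
        intro he
        rw [he] at h
        exact pow_ne_zero 3 he0' (by simpa using h.symm)
    rw [hset, cube_fiber_card e0 he0', h3]
  rw [hcard] at h
  rw [h, Finset.sum_congr rfl hfib, Finset.sum_const, smul_eq_mul, mul_comm]

/-- The key lower bound on the cubic exponential sum. -/
lemma Ssum_lower (d : F) (hd : d ≠ 0) :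
    -2 * Real.sqrt (Fintype.card F) ≤ Ssum F d := by
  have hq1 : 1 ≤ Fintype.card F := Fintype.card_pos
  have hqR : (0 : ℝ) ≤ (Fintype.card F : ℝ) := by positivity
  by_cases h3 : 3 ∣ Fintype.card Fˣ
  · -- even case
    have hcount := unity_count_even (F := F) h3
    have hq3 : 3 ∣ Fintype.card F - 1 := by
      rwa [Fintype.card_units] at h3
    -- the class of d
    set C' := (univ.filter fun e : F => e ≠ 0).image (fun e => d * e ^ 3) with hC'
    have hm : 3 * C'.card = Fintype.card F - 1 := card_cubeclass d hd hcount
    have hdC' : d ∈ C' := by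
      rw [hC', mem_image]
      exact ⟨1, by simp, by simp⟩
    have hC'sub : C' ⊆ univ.erase 0 := by
      intro u hu
      rw [hC', mem_image] at hu
      obtain ⟨e, he, rfl⟩ := hu
      rw [mem_filter] at he
      exact Finset.mem_erase.mpr ⟨mul_ne_zero hd (pow_ne_zero 3 he.2), mem_univ _⟩
    have hconst : ∀ u ∈ C', Ssum F u = Ssum F d := by
      intro u hu
      rw [hC', mem_image] at hu
      obtain ⟨e, he, rfl⟩ := hu
      rw [mem_filter] at he
      exact Ssum_mul_cube d e he.2
    set U := (univ : Finset F).erase 0 with hU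
    have hUcard : U.card = Fintype.card F - 1 := by
      rw [hU, Finset.card_erase_of_mem (mem_univ 0), card_univ]
    have hsumU : ∑ u ∈ U, Ssum F u = 0 := by
      have h0 := sum_Ssum (F := F)
      have := Finset.add_sum_erase univ (Ssum F) (mem_univ (0 : F))
      rw [← hU] at this
      rw [← this, Ssum_zero] at h0
      linarith
    have hsumUsq : ∑ u ∈ U, (Ssum F u) ^ 2
        = 2 * (Fintype.card F : ℝ) ^ 2 - 2 * (Fintype.card F : ℝ) := by
      have h0 := sum_Ssum_sq (F := F)
      rw [card_cube_pairs, hcount] at h0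
      have hcast : ((1 + (Fintype.card F - 1) * 3 : ℕ) : ℝ)
          = 3 * (Fintype.card F : ℝ) - 2 := by
        push_cast [Nat.cast_sub hq1]
        ring
      rw [hcast] at h0
      have hsplit : ∑ u : F, (Ssum F u) ^ 2
          = Ssum F 0 ^ 2 + ∑ u ∈ univ.erase 0, (Ssum F u) ^ 2 :=
        (Finset.add_sum_erase univ (fun u => (Ssum F u) ^ 2) (mem_univ (0 : F))).symm
      rw [hsplit, Ssum_zero] at h0
      rw [hU]
      nlinarith [h0]
    -- sums over the class and its complement
    set A := Ssum F d with hA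
    set m := (C'.card : ℝ) with hmR
    have hmpos : (0 : ℝ) < m := by
      rw [hmR]
      exact_mod_cast Finset.card_pos.mpr ⟨d, hdC'⟩
    have hsumC : ∑ u ∈ C', Ssum F u = m * A := by
      rw [Finset.sum_congr rfl hconst, Finset.sum_const, nsmul_eq_mul, hmR, hA]
    have hsumCsq : ∑ u ∈ C', (Ssum F u) ^ 2 = m * A ^ 2 := by
      rw [Finset.sum_congr rfl (fun u hu => by rw [hconst u hu]), Finset.sum_const,
        nsmul_eq_mul, hmR, hA]
    set T := U \ C' with hT
    have hTn : T.card = 2 * C'.card := by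
      rw [hT, Finset.card_sdiff_of_subset hC'sub, hUcard]
      omega
    have hTcard : (T.card : ℝ) = 2 * m := by
      rw [hTn, hmR]
      push_cast
      ring
    have hsumT : ∑ u ∈ T, Ssum F u = -(m * A) := by
      rw [hT, Finset.sum_sdiff_eq_sub hC'sub, hsumU, hsumC]
      ring
    have hsumTsq : ∑ u ∈ T, (Ssum F u) ^ 2
        = (2 * (Fintype.card F : ℝ) ^ 2 - 2 * (Fintype.card F : ℝ)) - m * A ^ 2 := by
      rw [hT, Finset.sum_sdiff_eq_sub hC'sub, hsumUsq, hsumCsq]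
    have hq6m : (Fintype.card F : ℝ) - 1 = 3 * m := by
      have hcast := congrArg (Nat.cast : ℕ → ℝ) hm
      push_cast [Nat.cast_sub hq1] at hcast
      rw [hmR]
      linarith
    -- Cauchy–Schwarz
    have hCS := Finset.sum_mul_sq_le_sq_mul_sq T (fun u => Ssum F u) (fun _ => 1)
    simp only [mul_one, one_pow] at hCS
    rw [hsumT, hsumTsq] at hCS
    simp only [Finset.sum_const, nsmul_eq_mul, mul_one] at hCS
    rw [hTcard] at hCS
    have h2q : 2 * (Fintype.card F : ℝ) ^ 2 - 2 * (Fintype.card F : ℝ)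
        = 6 * (Fintype.card F : ℝ) * m := by nlinarith [hq6m, hqR]
    have hAsq : A ^ 2 ≤ 4 * (Fintype.card F : ℝ) := by
      nlinarith [hCS, h2q, mul_pos hmpos hmpos, sq_nonneg (m * A), hmpos]
    have hs : Real.sqrt ((Fintype.card F : ℝ)) ^ 2 = (Fintype.card F : ℝ) :=
      Real.sq_sqrt hqR
    have hs0 : (0 : ℝ) ≤ Real.sqrt ((Fintype.card F : ℝ)) := Real.sqrt_nonneg _
    have h4 : A ^ 2 ≤ (2 * Real.sqrt ((Fintype.card F : ℝ))) ^ 2 := by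
      rw [mul_pow, hs]
      linarith [hAsq]
    have h5 := abs_le_of_sq_le_sq' h4 (by linarith)
    linarith [h5.1]
  · -- odd case
    have hco : Nat.Coprime 3 (Fintype.card Fˣ) :=
      (Nat.Prime.coprime_iff_not_dvd (by norm_num)).mpr h3
    have hcount := unity_count_odd (F := F) hco
    have h0 := sum_Ssum_sq (F := F)
    rw [card_cube_pairs, hcount, mul_one] at h0
    have hcast : ((1 + (Fintype.card F - 1) : ℕ) : ℝ) = (Fintype.card F : ℝ) := by
      push_cast [Nat.cast_sub hq1]
      ring
    rw [hcast] at h0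
    have hsplit : ∑ u : F, (Ssum F u) ^ 2
        = Ssum F 0 ^ 2 + ∑ u ∈ univ.erase 0, (Ssum F u) ^ 2 :=
      (Finset.add_sum_erase univ (fun u => (Ssum F u) ^ 2) (mem_univ (0 : F))).symm
    rw [hsplit, Ssum_zero] at h0
    have hzero : ∑ u ∈ univ.erase (0 : F), (Ssum F u) ^ 2 = 0 := by nlinarith [h0]
    have hmem : d ∈ univ.erase (0 : F) := Finset.mem_erase.mpr ⟨hd, mem_univ d⟩
    have := (Finset.sum_eq_zero_iff_of_nonneg
      (fun u _ => sq_nonneg (Ssum F u))).mp hzero d hmem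
    have hS0 : Ssum F d = 0 := by
      exact pow_eq_zero_iff (n := 2) (by norm_num) |>.mp this
    rw [hS0]
    have := Real.sqrt_nonneg ((Fintype.card F : ℝ))
    nlinarith


lemma card_in_HS (d : F) :
    2 * ((univ.filter fun t : F => d * t ^ 3 ∈ HS F).card : ℝ)
      = (Fintype.card F : ℝ) + Ssum F d := by
  have hcards : (univ.filter fun t : F => d * t ^ 3 ∈ HS F).card
      + (univ.filter fun t : F => ¬(d * t ^ 3 ∈ HS F)).card = Fintype.card F := by
    rw [Finset.card_filter_add_card_filter_not, card_univ]
  have hS : Ssum F d = ((univ.filter fun t : F => d * t ^ 3 ∈ HS F).card : ℝ)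
      - ((univ.filter fun t : F => ¬(d * t ^ 3 ∈ HS F)).card : ℝ) := by
    unfold Ssum psi
    rw [Finset.sum_ite, Finset.sum_const, Finset.sum_const, nsmul_eq_mul, nsmul_eq_mul]
    ring
  have hc := congrArg (Nat.cast : ℕ → ℝ) hcards
  push_cast at hc
  linarith

lemma cs_count (x y : F) (s : F) (hs : s ≠ 0) :
    (univ.filter fun c : F => c ^ 3 + (s + c) ^ 3 + (x + s) ^ 3 = y).card
      = if (y - x ^ 3) * (s⁻¹) ^ 3 ∈ HS F then 2 else 0 := by
  have h2 : (2 : F) = 0 := CharTwo.two_eq_zero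
  have hsi : s * s⁻¹ = 1 := mul_inv_cancel₀ hs
  have hAS : (x * s⁻¹) ^ 2 + x * s⁻¹ ∈ HS F := mem_HS.mpr ⟨x * s⁻¹, rfl⟩
  have hbij : (univ.filter fun c : F => c ^ 3 + (s + c) ^ 3 + (x + s) ^ 3 = y)
      = (univ.filter fun z : F =>
          z ^ 2 + z = (y - x ^ 3) * (s⁻¹) ^ 3 + ((x * s⁻¹) ^ 2 + x * s⁻¹)).image
            (fun z => z * s) := by
    ext c
    simp only [mem_image, mem_filter, mem_univ, true_and]
    constructor
    · intro hC
      refine ⟨c * s⁻¹, ?_, by field_simp⟩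
      linear_combination (-(s⁻¹ ^ 3)) * hC
        + (2 + 3 * s⁻¹ * x + 3 * s⁻¹ ^ 2 * x ^ 2 + 2 * s * s⁻¹ + 3 * s * s⁻¹ ^ 2 * x
            + 2 * s ^ 2 * s⁻¹ ^ 2 + 3 * c * s⁻¹ + 3 * c * s * s⁻¹ ^ 2
            + 3 * c ^ 2 * s⁻¹ ^ 2) * hsi
        + (1 + s⁻¹ * x + s⁻¹ ^ 2 * x ^ 2 - s⁻¹ ^ 3 * y + s⁻¹ ^ 3 * x ^ 3 + 2 * c * s⁻¹
            + 2 * c ^ 2 * s⁻¹ ^ 2 + c ^ 3 * s⁻¹ ^ 3) * h2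
    · rintro ⟨z, hz, rfl⟩
      linear_combination s ^ 3 * hz
        + (y - x ^ 3 + s * x ^ 2 + s * s⁻¹ * y - s * s⁻¹ * x ^ 3 + s ^ 2 * x
            + s ^ 2 * s⁻¹ * x ^ 2 + s ^ 2 * s⁻¹ ^ 2 * y - s ^ 2 * s⁻¹ ^ 2 * x ^ 3) * hsi
        + (2 * s * x ^ 2 + 2 * s ^ 2 * x + s ^ 3 + s ^ 3 * z + s ^ 3 * z ^ 2
            + s ^ 3 * z ^ 3) * h2
  rw [hbij, Finset.card_image_of_injective _ (fun a b hab => by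
    have := congrArg (fun u => u * s⁻¹) hab
    simpa [mul_assoc, hsi] using this)]
  by_cases hw : (y - x ^ 3) * (s⁻¹) ^ 3 ∈ HS F
  · rw [if_pos hw]
    have he : (y - x ^ 3) * (s⁻¹) ^ 3 + ((x * s⁻¹) ^ 2 + x * s⁻¹) ∈ HS F :=
      HS_add hw hAS
    obtain ⟨z0, hz0⟩ := mem_HS.mp he
    rw [← hz0]
    exact fiber_card z0
  · rw [if_neg hw]
    rw [Finset.card_eq_zero, Finset.filter_eq_empty_iff]
    intro z _
    intro hcontra
    apply hw
    have he : (y - x ^ 3) * (s⁻¹) ^ 3 + ((x * s⁻¹) ^ 2 + x * s⁻¹) ∈ HS F :=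
      mem_HS.mpr ⟨z, hcontra⟩
    exact (HS_add_iff hAS).mp he

lemma total_count (x y : F) (hxy : y ≠ x ^ 3) :
    ((univ.filter fun p : F × F =>
        p.1 ^ 3 + p.2 ^ 3 + (x + p.1 + p.2) ^ 3 = y).card : ℝ)
      = (Fintype.card F : ℝ) + Ssum F (y - x ^ 3) - 2 := by
  have h2 : (2 : F) = 0 := CharTwo.two_eq_zero
  set d : F := y - x ^ 3 with hd
  -- Step 1: change coordinates (a, b) ↦ (a + b, a)
  have step1 : (univ.filter fun p : F × F =>
        p.1 ^ 3 + p.2 ^ 3 + (x + p.1 + p.2) ^ 3 = y).card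
      = (univ.filter fun p : F × F =>
        p.2 ^ 3 + (p.1 + p.2) ^ 3 + (x + p.1) ^ 3 = y).card := by
    refine Finset.card_bij' (fun p _ => (p.1 + p.2, p.1)) (fun p _ => (p.2, p.1 + p.2))
      ?_ ?_ ?_ ?_
    · rintro ⟨a, b⟩ hp
      rw [mem_filter] at hp ⊢
      refine ⟨mem_univ _, ?_⟩
      have h := hp.2
      linear_combination h + (3 * a * b ^ 2 + 6 * a ^ 2 * b + 4 * a ^ 3) * h2
    · rintro ⟨s, c⟩ hp
      rw [mem_filter] at hp ⊢
      refine ⟨mem_univ _, ?_⟩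
      have h := hp.2
      linear_combination h + (3 * (x + s) ^ 2 * c + 6 * (x + s) * c ^ 2 + 4 * c ^ 3) * h2
    · rintro ⟨a, b⟩ _
      have hb : a + b + a = b := by linear_combination a * h2
      simp [hb]
    · rintro ⟨s, c⟩ _
      have hc : c + (s + c) = s := by linear_combination c * h2
      simp [hc]
  rw [step1]
  -- Step 2: sum over the first coordinate
  rw [Finset.card_filter, Fintype.sum_prod_type]
  have inner : ∀ s : F, (∑ c : F, if c ^ 3 + (s + c) ^ 3 + (x + s) ^ 3 = y then 1 else 0)
      = if s = 0 then 0 else (if d * (s⁻¹) ^ 3 ∈ HS F then 2 else 0) := by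
    intro s
    rw [← Finset.card_filter]
    by_cases hs : s = 0
    · subst hs
      rw [if_pos rfl, Finset.card_eq_zero, Finset.filter_eq_empty_iff]
      intro c _
      intro hcontra
      have hyx : y = x ^ 3 := by linear_combination -hcontra + c ^ 3 * h2
      exact hxy hyx
    · rw [if_neg hs, hd]
      exact cs_count x y s hs
  rw [Finset.sum_congr rfl fun s _ => inner s]
  -- Step 3: evaluate the sum
  have hzero : (if (0 : F) = 0 then 0 else (if d * ((0 : F)⁻¹) ^ 3 ∈ HS F then 2 else 0)) = 0 :=
    if_pos rfl
  rw [← Finset.add_sum_erase univ _ (mem_univ (0 : F)), hzero, zero_add]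
  have hite : ∀ s ∈ univ.erase (0 : F),
      (if s = 0 then 0 else (if d * (s⁻¹) ^ 3 ∈ HS F then 2 else 0))
        = (if d * (s⁻¹) ^ 3 ∈ HS F then 2 else 0) := by
    intro s hsmem
    rw [if_neg (Finset.mem_erase.mp hsmem).1]
  rw [Finset.sum_congr rfl hite, ← Finset.sum_filter, Finset.sum_const, smul_eq_mul]
  -- Step 4: invert the index
  have hinv : ((univ.erase (0 : F)).filter fun s => d * (s⁻¹) ^ 3 ∈ HS F).card
      = ((univ.erase (0 : F)).filter fun t => d * t ^ 3 ∈ HS F).card := by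
    refine Finset.card_bij' (fun s _ => s⁻¹) (fun t _ => t⁻¹) ?_ ?_ ?_ ?_
    · intro s hsmem
      rw [mem_filter, Finset.mem_erase] at hsmem ⊢
      exact ⟨⟨inv_ne_zero hsmem.1.1, mem_univ _⟩, hsmem.2⟩
    · intro t htmem
      rw [mem_filter, Finset.mem_erase] at htmem ⊢
      refine ⟨⟨inv_ne_zero htmem.1.1, mem_univ _⟩, ?_⟩
      rw [inv_inv]
      exact htmem.2
    · intro s _; exact inv_inv s
    · intro t _; exact inv_inv t
  rw [hinv]
  -- Step 5: relate to the full count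
  have h0HS : d * (0 : F) ^ 3 ∈ HS F := by
    simpa using zero_mem_HS (F := F)
  have hsplit0 : (univ.filter fun t : F => d * t ^ 3 ∈ HS F)
      = insert 0 ((univ.erase (0 : F)).filter fun t => d * t ^ 3 ∈ HS F) := by
    ext u
    simp only [mem_filter, mem_univ, true_and, mem_insert, Finset.mem_erase]
    by_cases hu0 : u = 0
    · subst hu0; simp [zero_mem_HS (F := F)]
    · simp [hu0]
  have hnotmem : (0 : F) ∉ ((univ.erase (0 : F)).filter fun t => d * t ^ 3 ∈ HS F) := by
    simp
  have hcards : (univ.filter fun t : F => d * t ^ 3 ∈ HS F).card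
      = ((univ.erase (0 : F)).filter fun t => d * t ^ 3 ∈ HS F).card + 1 := by
    rw [hsplit0, Finset.card_insert_of_notMem hnotmem]
  have hkey := card_in_HS (F := F) d
  push_cast
  rw [hcards] at hkey
  push_cast at hkey
  linarith

end CountAffineAux

/-- For `n ≥ 1`, `F = 𝔽_{2^n}`, and `x y : F` with `y ≠ x³`, the number of
ordered pairs `(a, b) ∈ F × F` with `a³ + b³ + (x + a + b)³ = y` is at least
`2^n − 2√(2^n) − 2`. -/
theorem count_affine_points (n : ℕ) (hn : 1 ≤ n) (x y : GaloisField 2 n) (hxy : y ≠ x ^ 3) :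
    (2 : ℝ) ^ n - 2 * Real.sqrt ((2 : ℝ) ^ n) - 2 ≤
      ({p : GaloisField 2 n × GaloisField 2 n |
          p.1 ^ 3 + p.2 ^ 3 + (x + p.1 + p.2) ^ 3 = y} : Set _).ncard := by
  letI : Fintype (GaloisField 2 n) := Fintype.ofFinite _
  letI : DecidableEq (GaloisField 2 n) := Classical.decEq _
  have hcard : Fintype.card (GaloisField 2 n) = 2 ^ n := by
    rw [← Nat.card_eq_fintype_card]
    exact GaloisField.card 2 n (by omega)
  have hset : ({p : GaloisField 2 n × GaloisField 2 n |
          p.1 ^ 3 + p.2 ^ 3 + (x + p.1 + p.2) ^ 3 = y} : Set _)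
      = ↑(Finset.univ.filter fun p : GaloisField 2 n × GaloisField 2 n =>
          p.1 ^ 3 + p.2 ^ 3 + (x + p.1 + p.2) ^ 3 = y) := by
    ext p
    simp
  rw [hset, Set.ncard_coe_finset]
  have hd : y - x ^ 3 ≠ 0 := sub_ne_zero.mpr hxy
  have htot := CountAffineAux.total_count (F := GaloisField 2 n) x y hxy
  have hlow := CountAffineAux.Ssum_lower (F := GaloisField 2 n) (y - x ^ 3) hd
  rw [hcard] at htot hlow
  have h2n : ((2 ^ n : ℕ) : ℝ) = (2 : ℝ) ^ n := by push_cast; ring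
  rw [h2n] at htot hlow
  linarith [htot, hlow]
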